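/- Let p ≥ 1, α > 0, and consider the nonlocal operator L_Ψ[f](σ) = f'' + (p/σ)f' - (σ/2)f' + (2(p-1)/σ²)f - (2p/σ)∫₀^σ (f'(z)/z)dz acting on the span of even monomials {σ^{2k} : k ≥ 1}. Then every eigenvalue of L_Ψ on this span is a negative integer -k for some k ≥ 1; in particular L_Ψ has no nonzero fixed vector (element of its nullspace) in this span. -/

import Mathlib

/-- The nonlocal operator
`L_Ψ[f](σ) = f'' + (p/σ)f' - (σ/2)f' + (2(p-1)/σ²)f - (2p/σ)∫₀^σ f'(z)/z dz`. -/
noncomputable def LPsi (p : ℕ) (f : ℝ → ℝ) (σ : ℝ) : ℝ :=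
  deriv (deriv f) σ + ((p : ℝ) / σ) * deriv f σ - (σ / 2) * deriv f σ
    + (2 * ((p : ℝ) - 1) / σ ^ 2) * f σ
    - (2 * (p : ℝ) / σ) * ∫ z in (0:ℝ)..σ, deriv f z / z

section LPsiAux
open Finset Polynomial intervalIntegral

noncomputable def Acoef (p j : ℕ) : ℝ :=
  (2*j+2)*(2*j+1) + 2*p*(j+1) + 2*((p:ℝ)-1) - 4*p*(j+1)/(2*j+1)

lemma deriv1 (n : ℕ)(c : ℕ → ℝ) :
    deriv (fun σ:ℝ => ∑ j ∈ range n, c j * σ^(2*j+2))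
      = fun σ => ∑ j ∈ range n, c j * ((2*j+2) * σ^(2*j+1)) := by
  funext σ
  rw [deriv_fun_sum (fun j _ => ((differentiable_pow (2*j+2)).const_mul (c j)).differentiableAt)]
  refine sum_congr rfl fun j _ => ?_
  rw [deriv_const_mul _ (differentiableAt_pow _), deriv_pow_field]
  norm_num

lemma deriv2 (n : ℕ)(c : ℕ → ℝ) :
    deriv (fun σ:ℝ => ∑ j ∈ range n, c j * ((2*j+2) * σ^(2*j+1)))
      = fun σ => ∑ j ∈ range n, c j * ((2*j+2) * ((2*j+1) * σ^(2*j))) := by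
  funext σ
  rw [deriv_fun_sum (fun j _ => (((differentiableAt_pow (2*j+1)).const_mul (2*(j:ℝ)+2)).const_mul (c j)))]
  refine sum_congr rfl fun j _ => ?_
  rw [deriv_const_mul _ ((differentiableAt_pow (2*j+1)).const_mul (2*(j:ℝ)+2)),
    deriv_const_mul _ (differentiableAt_pow _), deriv_pow_field]
  push_cast
  ring

lemma LPsi_sum (p n : ℕ) (c : ℕ → ℝ) {σ : ℝ} (hσ : 0 < σ) :
    LPsi p (fun σ => ∑ j ∈ range n, c j * σ^(2*j+2)) σ
      = ∑ j ∈ range n, c j * (Acoef p j * σ^(2*j) - (j+1) * σ^(2*j+2)) := by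
  have hσ0 : σ ≠ 0 := ne_of_gt hσ
  have hint : (∫ z in (0:ℝ)..σ, (∑ j ∈ range n, c j * ((2*j+2) * z^(2*j+1))) / z)
      = ∑ j ∈ range n, c j * ((2*j+2) * σ^(2*j+1) / (2*j+1)) := by
    rw [intervalIntegral.integral_congr_ae (g := fun z => ∑ j ∈ range n, c j * ((2*j+2) * z^(2*j)))]
    · rw [intervalIntegral.integral_finset_sum (fun j _ => by
        apply Continuous.intervalIntegrable; continuity)]
      refine sum_congr rfl fun j _ => ?_
      rw [intervalIntegral.integral_const_mul, intervalIntegral.integral_const_mul, integral_pow]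
      have : ((0:ℝ))^(2*j+1) = 0 := by simp
      push_cast
      rw [this]
      ring
    · apply Filter.Eventually.of_forall
      intro z hz
      rw [Set.uIoc_of_le hσ.le] at hz
      have hz0 : z ≠ 0 := ne_of_gt hz.1
      rw [sum_div]
      refine sum_congr rfl fun j _ => ?_
      rw [pow_succ]
      field_simp
  unfold LPsi
  rw [deriv1, deriv2]
  simp only []
  rw [hint]
  rw [mul_sum, mul_sum, mul_sum, mul_sum]
  rw [← sum_add_distrib, ← sum_sub_distrib, ← sum_add_distrib, ← sum_sub_distrib]
  refine sum_congr rfl fun j _ => ?_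
  unfold Acoef
  have h21 : (2*(j:ℝ)+1) ≠ 0 := by positivity
  have e1 : σ^(2*j+1) = σ^(2*j) * σ := by rw [pow_succ]
  have e2 : σ^(2*j+2) = σ^(2*j) * σ^2 := by rw [pow_add]
  rw [e1, e2]
  field_simp
  ring

def MonoRep (f : ℝ → ℝ) : Prop :=
  ∃ (n : ℕ) (c : ℕ → ℝ), (∀ j, n ≤ j → c j = 0) ∧
    f = fun σ => ∑ j ∈ range n, c j * σ^(2*j+2)

lemma rep_of_mem (f : ℝ → ℝ)
    (hf : f ∈ Submodule.span ℝ
      {g : ℝ → ℝ | ∃ k : ℕ, 1 ≤ k ∧ g = fun σ : ℝ => σ ^ (2 * k)}) : MonoRep f := by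
  induction hf using Submodule.span_induction with
  | mem g hg =>
    obtain ⟨k, hk, rfl⟩ := hg
    refine ⟨k, fun j => if j = k-1 then 1 else 0, fun j hj => by simp only; rw [if_neg]; omega, ?_⟩
    funext σ
    simp only [ite_mul, one_mul, zero_mul]
    rw [Finset.sum_ite_eq' (range k) (k-1) (fun j => σ^(2*j+2))]
    rw [if_pos (by simp; omega)]
    congr 1
    omega
  | zero => exact ⟨0, fun _ => 0, fun _ _ => rfl, by funext σ; simp⟩
  | add g h _ _ hg hh =>
    obtain ⟨n1, c1, hc1, rfl⟩ := hg
    obtain ⟨n2, c2, hc2, rfl⟩ := hh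
    refine ⟨max n1 n2, fun j => c1 j + c2 j, fun j hj => by
      simp only; rw [hc1 j (le_trans (le_max_left _ _) hj),
        hc2 j (le_trans (le_max_right _ _) hj)]; ring, ?_⟩
    funext σ
    simp only [Pi.add_apply, add_mul]
    rw [sum_add_distrib]
    congr 1
    · exact Finset.sum_subset (Finset.range_subset_range.2 (le_max_left _ _))
        (fun j _ hj => by rw [hc1 j (by simpa using hj)]; ring)
    · exact Finset.sum_subset (Finset.range_subset_range.2 (le_max_right _ _))
        (fun j _ hj => by rw [hc2 j (by simpa using hj)]; ring)
  | smul a g _ hg =>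
    obtain ⟨n, c, hc, rfl⟩ := hg
    refine ⟨n, fun j => a * c j, fun j hj => by simp only; rw [hc j hj]; ring, ?_⟩
    funext σ
    simp [Finset.mul_sum, mul_assoc]

lemma coeff_helper1 (n : ℕ) (d : ℕ → ℝ) (m : ℕ) :
    (∑ j ∈ range n, Polynomial.C (d j) * Polynomial.X^j).coeff m
      = if m < n then d m else 0 := by
  rw [Polynomial.finset_sum_coeff]
  simp only [coeff_C_mul, coeff_X_pow, mul_ite, mul_one, mul_zero]
  rw [Finset.sum_ite_eq (range n) m d]
  simp

lemma coeff_helper2 (n : ℕ) (d : ℕ → ℝ) (m : ℕ) :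
    (∑ j ∈ range n, Polynomial.C (d j) * Polynomial.X^(j+1)).coeff (m+1)
      = if m < n then d m else 0 := by
  rw [Polynomial.finset_sum_coeff]
  simp only [coeff_C_mul, coeff_X_pow, add_left_inj, mul_ite, mul_one, mul_zero]
  rw [Finset.sum_ite_eq (range n) m d]
  simp

lemma coeff_helper2' (n : ℕ) (d : ℕ → ℝ) :
    (∑ j ∈ range n, Polynomial.C (d j) * Polynomial.X^(j+1)).coeff 0 = 0 := by
  rw [Polynomial.finset_sum_coeff]
  simp [coeff_X_pow]

lemma spectral (p n : ℕ) (c : ℕ → ℝ) (hc : ∀ j, n ≤ j → c j = 0) (lam : ℝ)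
    (heig : ∀ σ : ℝ, 0 < σ →
      (∑ j ∈ range n, c j * (Acoef p j * σ^(2*j) - ((j:ℝ)+1) * σ^(2*j+2)))
        = lam * ∑ j ∈ range n, c j * σ^(2*j+2)) :
    (∀ σ : ℝ, 0 < σ → ∑ j ∈ range n, c j * σ^(2*j+2) = 0)
      ∨ ∃ k : ℕ, 1 ≤ k ∧ lam = -(k:ℝ) := by
  by_cases hz : ∀ σ : ℝ, 0 < σ → ∑ j ∈ range n, c j * σ^(2*j+2) = 0
  · exact Or.inl hz
  right
  push_neg at hz
  obtain ⟨σ₀, hσ₀, hf₀⟩ := hz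
  set Q : Polynomial ℝ := ∑ j ∈ range n, Polynomial.C (c j) * Polynomial.X^(j+1) with hQdef
  set R1 : Polynomial ℝ := ∑ j ∈ range n, Polynomial.C (c j * Acoef p j) * Polynomial.X^j with hR1def
  set R2 : Polynomial ℝ := ∑ j ∈ range n, Polynomial.C (c j * ((j:ℝ)+1)) * Polynomial.X^(j+1) with hR2def
  have hQeval : ∀ σ : ℝ, Q.eval (σ^2) = ∑ j ∈ range n, c j * σ^(2*j+2) := by
    intro σ
    rw [hQdef, Polynomial.eval_finset_sum]
    refine sum_congr rfl fun j _ => ?_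
    have e : (σ^2)^(j+1) = σ^(2*j+2) := by rw [← pow_mul, Nat.mul_add, Nat.mul_one]
    simp only [Polynomial.eval_mul, Polynomial.eval_C, Polynomial.eval_pow, Polynomial.eval_X, e]
  have hReval : ∀ σ : ℝ, (R1 - R2).eval (σ^2)
      = ∑ j ∈ range n, c j * (Acoef p j * σ^(2*j) - ((j:ℝ)+1) * σ^(2*j+2)) := by
    intro σ
    rw [Polynomial.eval_sub, hR1def, hR2def, Polynomial.eval_finset_sum, Polynomial.eval_finset_sum,
      ← Finset.sum_sub_distrib]
    refine sum_congr rfl fun j _ => ?_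
    have e : (σ^2)^(j+1) = σ^(2*j+2) := by rw [← pow_mul, Nat.mul_add, Nat.mul_one]
    have e2 : (σ^2)^j = σ^(2*j) := by rw [← pow_mul]
    simp only [Polynomial.eval_mul, Polynomial.eval_C, Polynomial.eval_pow, Polynomial.eval_X, e, e2]
    ring
  -- the polynomial identity
  have hpoly : R1 - R2 = Polynomial.C lam * Q := by
    have hroot : Set.Infinite {x : ℝ | ((R1 - R2) - Polynomial.C lam * Q).IsRoot x} := by
      apply Set.Infinite.mono (s := Set.Ioi (0:ℝ)) ?_ (Set.Ioi_infinite 0)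
      intro x hx
      have hx' : (0:ℝ) < x := hx
      have hs : (Real.sqrt x)^2 = x := Real.sq_sqrt hx'.le
      show ((R1 - R2) - Polynomial.C lam * Q).eval x = 0
      rw [← hs, Polynomial.eval_sub, Polynomial.eval_mul, Polynomial.eval_C, hReval, hQeval,
        heig _ (Real.sqrt_pos.2 hx')]
      ring
    have := Polynomial.eq_zero_of_infinite_isRoot _ hroot
    exact sub_eq_zero.mp this
  have hQne : Q ≠ 0 := by
    intro h
    apply hf₀
    rw [← hQeval, h, Polynomial.eval_zero]
  set K := Q.natDegree with hKdef
  have hQc : ∀ m : ℕ, Q.coeff (m+1) = c m := by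
    intro m
    rw [hQdef, coeff_helper2]
    split_ifs with h
    · rfl
    · exact (hc m (by omega)).symm
  have hQc0 : Q.coeff 0 = 0 := by rw [hQdef]; exact coeff_helper2' n c
  have hK1 : 1 ≤ K := by
    by_contra h
    have hK0 : K = 0 := by omega
    have := Polynomial.eq_C_of_natDegree_eq_zero hK0
    rw [hQc0] at this
    simp at this
    exact hQne this
  have hlead : Q.coeff K ≠ 0 := Polynomial.leadingCoeff_ne_zero.2 hQne
  have hcK1 : Q.coeff K = c (K-1) := by
    have h1 := hQc (K-1)
    rwa [show (K-1)+1 = K from by omega] at h1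
  have hcKtop : c K = 0 := by
    rw [← hQc K]
    exact Polynomial.coeff_eq_zero_of_natDegree_lt (by omega)
  -- take coefficient K of the polynomial identity
  have hcoeffK : (R1 - R2).coeff K = lam * Q.coeff K := by
    rw [hpoly, Polynomial.coeff_C_mul]
  have hR1K : R1.coeff K = 0 := by
    rw [hR1def, coeff_helper1]
    split_ifs with h
    · rw [hcKtop]; ring
    · rfl
  have hR2K : R2.coeff K = c (K-1) * (((K-1:ℕ):ℝ)+1) := by
    have h2 := coeff_helper2 n (fun j => c j * ((j:ℝ)+1)) (K-1)
    rw [show (K-1)+1 = K from by omega] at h2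
    rw [hR2def, h2]
    split_ifs with h
    · rfl
    · rw [hc _ (by omega)]
      ring
  have hlamK : -(c (K-1) * (K:ℝ)) = lam * c (K-1) := by
    have h1 : (((K-1:ℕ):ℝ)+1) = (K:ℝ) := by
      push_cast [hK1]
      ring
    rw [← hcK1, ← hcoeffK, Polynomial.coeff_sub, hR1K, hR2K, h1, hcK1]
    ring
  refine ⟨K, hK1, ?_⟩
  have hcne : c (K-1) ≠ 0 := by rw [← hcK1]; exact hlead
  field_simp at hlamK
  -- -(c * K) = lam * c  →  lam = -K
  have : c (K-1) * (lam + (K:ℝ)) = 0 := by rw [← hlamK]; ring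
  rcases mul_eq_zero.mp this with h | h
  · exact absurd h hcne
  · linarith

end LPsiAux

/-- On the span of the even monomials `{σ^(2k) : k ≥ 1}`, every eigenvalue of the
nonlocal operator `L_Ψ` is a negative integer `-k` with `k ≥ 1`; in particular
`L_Ψ` has no nonzero element of its nullspace in this span. -/
theorem LPsi_spectrum_on_even_monomials (p : ℕ) (hp : 1 ≤ p)
    (f : ℝ → ℝ)
    (hf : f ∈ Submodule.span ℝ
      {g : ℝ → ℝ | ∃ k : ℕ, 1 ≤ k ∧ g = fun σ : ℝ => σ ^ (2 * k)}) :
    (∀ lam : ℝ, (∀ σ : ℝ, 0 < σ → LPsi p f σ = lam * f σ) →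
      (∀ σ : ℝ, 0 < σ → f σ = 0) ∨ ∃ k : ℕ, 1 ≤ k ∧ lam = -(k : ℝ)) ∧
    ((∀ σ : ℝ, 0 < σ → LPsi p f σ = 0) → ∀ σ : ℝ, 0 < σ → f σ = 0) := by
  obtain ⟨n, c, hc, rfl⟩ := rep_of_mem f hf
  have main : ∀ lam : ℝ,
      (∀ σ : ℝ, 0 < σ → LPsi p (fun σ => ∑ j ∈ Finset.range n, c j * σ^(2*j+2)) σ
        = lam * ∑ j ∈ Finset.range n, c j * σ^(2*j+2)) →
      (∀ σ : ℝ, 0 < σ → ∑ j ∈ Finset.range n, c j * σ^(2*j+2) = 0)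
        ∨ ∃ k : ℕ, 1 ≤ k ∧ lam = -(k : ℝ) := by
    intro lam hlam
    apply spectral p n c hc lam
    intro σ hσ
    rw [← LPsi_sum p n c hσ]
    exact hlam σ hσ
  refine ⟨main, fun h0 => ?_⟩
  rcases main 0 (fun σ hσ => by rw [h0 σ hσ]; ring) with h | ⟨k, hk, hk0⟩
  · exact h
  · exfalso
    have : (k:ℝ) = 0 := by linarith
    have : k = 0 := by exact_mod_cast this
    omega
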